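/- arXiv:1508.04218 — 4 statements merged into one kernel-verified Lean document; each statement's English description precedes it below -/
import Mathlib

section
/- Let E ⊂ ℝ^d be a bounded domain and 1 ≤ p < ∞. Suppose φ is a Schwartz function whose inverse Fourier transform φ^∨ is supported in B₁(0) and satisfies ∫ φ^∨(x) dx = 0. Then for every integer k, ‖(φ(2^{−k}·) χ̂_E)^∨‖_{L^p} ≲ |(∂E)_{2^{−k}}|^{1/p}, with implicit constant depending only on φ and p. -/
open MeasureTheory FourierTransform Metric
open scoped RealInnerProductSpace

set_option maxHeartbeats 1000000 in
/-- Let `E ⊂ ℝ^d` be a bounded domain and `1 ≤ p < ∞`. If `φ` is Schwartz with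
`φ^∨` supported in `B₁(0)` and `∫ φ^∨ = 0`, then for every `k ∈ ℤ`,
`‖(φ(2^{-k}·) χ̂_E)^∨‖_p ≲ |(∂E)_{2^{-k}}|^{1/p}`. -/
theorem stmt4 (d : ℕ) (hd : 0 < d) (p : ℝ) (hp : 1 ≤ p)
    (E : Set (EuclideanSpace ℝ (Fin d)))
    (hEopen : IsOpen E) (hEconn : IsConnected E) (hEbdd : Bornology.IsBounded E)
    (φ : SchwartzMap (EuclideanSpace ℝ (Fin d)) ℂ)
    (hsupp : Function.support (𝓕⁻ (⇑φ)) ⊆ Metric.ball 0 1)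
    (hmean : (∫ x : EuclideanSpace ℝ (Fin d), 𝓕⁻ (⇑φ) x) = 0) :
    ∃ C : ℝ, 0 < C ∧ ∀ k : ℤ,
      eLpNorm (𝓕⁻ (fun ξ : EuclideanSpace ℝ (Fin d) =>
          φ ((2:ℝ) ^ (-k) • ξ) * 𝓕 (E.indicator fun _ => (1:ℂ)) ξ))
        (ENNReal.ofReal p) volume
        ≤ ENNReal.ofReal C *
          (volume (thickening ((2:ℝ) ^ (-k)) (frontier E))) ^ (1/p) := by
  classical
  set χ : EuclideanSpace ℝ (Fin d) → ℂ := E.indicator (fun _ => (1:ℂ)) with hχdef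
  have hEmeas := hEopen.measurableSet
  have hχmeas : StronglyMeasurable χ := stronglyMeasurable_const.indicator hEmeas
  have hχint : Integrable χ := by
    rw [hχdef, integrable_indicator_iff hEmeas]
    exact integrableOn_const hEbdd.measure_lt_top.ne
  have hχle : ∀ a, ‖χ a‖ ≤ 1 := by
    intro a
    rw [hχdef]
    by_cases h : a ∈ E <;> simp [Set.indicator_of_mem, Set.indicator_of_notMem, h]
  set ψS : SchwartzMap (EuclideanSpace ℝ (Fin d)) ℂ :=
    (FourierTransform.fourierCLE ℂ (SchwartzMap (EuclideanSpace ℝ (Fin d)) ℂ)).symm φ with hψSdef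
  have hψcoe : ⇑ψS = 𝓕⁻ ⇑φ := by simp [hψSdef, SchwartzMap.fourierInv_coe]
  set M : ℝ := ∫ x, ‖ψS x‖ with hMdef
  have hM0 : 0 ≤ M := integral_nonneg fun x => norm_nonneg _
  refine ⟨M + 1, by linarith, fun k => ?_⟩
  set δ : ℝ := (2:ℝ) ^ (-k) with hδdef
  have hδpos : 0 < δ := by positivity
  have hfin : Module.finrank ℝ (EuclideanSpace ℝ (Fin d)) = d := finrank_euclideanSpace_fin
  have hψδ : Integrable (fun ξ => φ (δ • ξ)) volume := φ.integrable.comp_smul hδpos.ne'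
  have hscale : ∀ z, 𝓕⁻ (fun ξ => φ (δ • ξ)) z = ((δ ^ d)⁻¹ : ℝ) • ψS (δ⁻¹ • z) := by
    intro z
    have h1 := Measure.integral_comp_smul_of_nonneg
      (μ := (volume : Measure (EuclideanSpace ℝ (Fin d))))
      (fun η => Complex.exp ((((2 * Real.pi * ⟪δ⁻¹ • η, z⟫ : ℝ)) : ℂ) * Complex.I) • φ η) δ
      (hR := hδpos.le)
    simp only [smul_smul, inv_mul_cancel₀ hδpos.ne', one_smul] at h1
    rw [Real.fourierInv_eq', h1, hfin]
    congr 1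
    simp_rw [real_inner_smul_left, show ∀ η : EuclideanSpace ℝ (Fin d),
      δ⁻¹ * ⟪η, z⟫ = ⟪η, δ⁻¹ • z⟫ from fun η => (real_inner_smul_right η z δ⁻¹).symm]
    rw [congrFun hψcoe (δ⁻¹ • z), Real.fourierInv_eq']
  have key : ∀ x, 𝓕⁻ (fun ξ => φ (δ • ξ) * 𝓕 χ ξ) x
      = ∫ w, χ (x - δ • w) * ψS w := by
    intro x
    set F : EuclideanSpace ℝ (Fin d) → EuclideanSpace ℝ (Fin d) → ℂ :=
      fun ξ y => (Complex.exp (((2 * Real.pi * ⟪ξ, x⟫ : ℝ) : ℂ) * Complex.I) * φ (δ • ξ) *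
        Complex.exp (((-2 * Real.pi * ⟪y, ξ⟫ : ℝ) : ℂ) * Complex.I)) * χ y with hFdef
    have hcont : Continuous fun z : EuclideanSpace ℝ (Fin d) × EuclideanSpace ℝ (Fin d) =>
        Complex.exp (((2 * Real.pi * ⟪z.1, x⟫ : ℝ) : ℂ) * Complex.I) * φ (δ • z.1) *
          Complex.exp (((-2 * Real.pi * ⟪z.2, z.1⟫ : ℝ) : ℂ) * Complex.I) := by
      have c0 : Continuous fun z : EuclideanSpace ℝ (Fin d) × EuclideanSpace ℝ (Fin d) =>
          (⟪z.1, x⟫ : ℝ) := continuous_fst.inner continuous_const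
      have c2 : Continuous fun z : EuclideanSpace ℝ (Fin d) × EuclideanSpace ℝ (Fin d) =>
          (⟪z.2, z.1⟫ : ℝ) := continuous_snd.inner continuous_fst
      exact ((Complex.continuous_exp.comp ((Complex.continuous_ofReal.comp
          (continuous_const.mul c0 : Continuous fun z : EuclideanSpace ℝ (Fin d) × EuclideanSpace ℝ (Fin d) => 2 * Real.pi * (⟪z.1, x⟫ : ℝ))).mul continuous_const)).mul
          (φ.continuous.comp (continuous_fst.const_smul δ))).mul
        (Complex.continuous_exp.comp ((Complex.continuous_ofReal.comp
          (continuous_const.mul c2 : Continuous fun z : EuclideanSpace ℝ (Fin d) × EuclideanSpace ℝ (Fin d) => -2 * Real.pi * (⟪z.2, z.1⟫ : ℝ))).mul continuous_const))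
    have hFmeas : AEStronglyMeasurable (Function.uncurry F) (volume.prod volume) := by
      have huncurry : Function.uncurry F = fun z =>
          (Complex.exp (((2 * Real.pi * ⟪z.1, x⟫ : ℝ) : ℂ) * Complex.I) * φ (δ • z.1) *
            Complex.exp (((-2 * Real.pi * ⟪z.2, z.1⟫ : ℝ) : ℂ) * Complex.I)) * χ z.2 := rfl
      rw [huncurry]
      exact hcont.aestronglyMeasurable.mul
        (hχmeas.comp_measurable measurable_snd).aestronglyMeasurable
    have hFint : Integrable (Function.uncurry F) (volume.prod volume) := by
      refine Integrable.mono' (hψδ.norm.mul_prod hχint.norm) hFmeas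
        (Filter.Eventually.of_forall fun z => ?_)
      simp only [Function.uncurry, hFdef, norm_mul, 
        Complex.norm_exp_ofReal_mul_I, one_mul, mul_one]
      exact le_rfl
    calc 𝓕⁻ (fun ξ => φ (δ • ξ) * 𝓕 χ ξ) x
        = ∫ ξ, ∫ y, F ξ y := by
          rw [Real.fourierInv_eq']
          congr 1; funext ξ
          rw [Real.fourier_eq']
          simp only [smul_eq_mul, hFdef]
          rw [← mul_assoc, ← integral_const_mul]
          congr 1; funext y
          ring
      _ = ∫ y, ∫ ξ, F ξ y := integral_integral_swap hFint
      _ = ∫ y, χ y * (𝓕⁻ (fun ξ => φ (δ • ξ)) (x - y)) := by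
          congr 1; funext y
          rw [Real.fourierInv_eq']
          simp only [smul_eq_mul, hFdef]
          rw [← integral_const_mul]
          congr 1; funext ξ
          have hsplit : (((2 * Real.pi * ⟪ξ, x - y⟫ : ℝ)) : ℂ) * Complex.I
              = ((2 * Real.pi * ⟪ξ, x⟫ : ℝ) : ℂ) * Complex.I
                + ((-2 * Real.pi * ⟪y, ξ⟫ : ℝ) : ℂ) * Complex.I := by
            rw [inner_sub_right, real_inner_comm y ξ]
            push_cast
            ring
          rw [hsplit, Complex.exp_add]
          ring
      _ = ∫ y, χ y * (((δ ^ d)⁻¹ : ℝ) • ψS (δ⁻¹ • (x - y))) := by simp_rw [hscale]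
      _ = ∫ y, (fun u => χ (x - u) * (((δ ^ d)⁻¹ : ℝ) • ψS (δ⁻¹ • u))) (-(y - x)) := by
          congr 1; funext y
          simp only [neg_sub, sub_sub_cancel]
      _ = ∫ y, (fun u => χ (x - u) * (((δ ^ d)⁻¹ : ℝ) • ψS (δ⁻¹ • u))) (-y) :=
          integral_sub_right_eq_self
            (fun t => (fun u => χ (x - u) * (((δ ^ d)⁻¹ : ℝ) • ψS (δ⁻¹ • u))) (-t)) x
      _ = ∫ u, χ (x - u) * (((δ ^ d)⁻¹ : ℝ) • ψS (δ⁻¹ • u)) :=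
          integral_neg_eq_self
            (fun u => χ (x - u) * (((δ ^ d)⁻¹ : ℝ) • ψS (δ⁻¹ • u))) volume
      _ = ∫ w, χ (x - δ • w) * ψS w := by
          have h3 := Measure.integral_comp_inv_smul_of_nonneg
            (μ := (volume : Measure (EuclideanSpace ℝ (Fin d))))
            (fun w => χ (x - δ • w) * ψS w) hδpos.le
          simp only [smul_smul, mul_inv_cancel₀ hδpos.ne', one_smul] at h3
          rw [show (fun u => χ (x - u) * (((δ ^ d)⁻¹ : ℝ) • ψS (δ⁻¹ • u)))
              = fun u => ((δ ^ d)⁻¹ : ℝ) • (χ (x - u) * ψS (δ⁻¹ • u)) from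
            funext fun u => mul_smul_comm _ _ _]
          rw [integral_smul, h3, hfin, smul_smul,
            inv_mul_cancel₀ (pow_ne_zero _ hδpos.ne'), one_smul]
  have hvanish : ∀ x, x ∉ thickening δ (frontier E) →
      (∫ w, χ (x - δ • w) * ψS w) = 0 := by
    intro x hx
    have hball : ball x δ ⊆ E ∪ (closure E)ᶜ := by
      intro z hz
      by_cases hzE : z ∈ E
      · exact Or.inl hzE
      refine Or.inr fun hzc => ?_
      have hzf : z ∈ frontier E := ⟨hzc, fun h => hzE (by rwa [hEopen.interior_eq] at h)⟩
      exact hx (mem_thickening_iff.2 ⟨z, hzf, by rw [dist_comm]; exact hz⟩)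
    have hxball : x ∈ ball x δ := mem_ball_self hδpos
    have hconst : ∀ z ∈ ball x δ, χ z = χ x := by
      rcases ((convex_ball x δ).isPreconnected).subset_or_subset hEopen
          isClosed_closure.isOpen_compl
          (Set.disjoint_left.2 fun a ha hac => hac (subset_closure ha)) hball with hsub | hsub
      · intro z hz
        rw [hχdef, Set.indicator_of_mem (hsub hz), Set.indicator_of_mem (hsub hxball)]
      · intro z hz
        rw [hχdef, Set.indicator_of_notMem (fun h => hsub hz (subset_closure h)),
          Set.indicator_of_notMem (fun h => hsub hxball (subset_closure h))]
    have hint : ∀ w, χ (x - δ • w) * ψS w = χ x * ψS w := by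
      intro w
      by_cases hw : w ∈ ball (0 : EuclideanSpace ℝ (Fin d)) 1
      · have hmem : x - δ • w ∈ ball x δ := by
          rw [mem_ball, dist_eq_norm]
          have h1 : x - δ • w - x = -(δ • w) := by abel
          rw [h1, norm_neg, norm_smul, Real.norm_eq_abs, abs_of_nonneg hδpos.le]
          calc δ * ‖w‖ < δ * 1 := (mul_lt_mul_iff_right₀ hδpos).2 (mem_ball_zero_iff.1 hw)
            _ = δ := mul_one δ
        rw [hconst _ hmem]
      · have h0 : ψS w = 0 := by
          rw [congrFun hψcoe w]
          by_contra h
          exact hw (hsupp (Function.mem_support.2 h))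
        rw [h0, mul_zero, mul_zero]
    calc (∫ w, χ (x - δ • w) * ψS w) = ∫ w, χ x * ψS w := by simp_rw [hint]
      _ = χ x * ∫ w, ψS w := integral_const_mul _ _
      _ = 0 := by rw [hψcoe, hmean, mul_zero]
  have hbound : ∀ x, ‖∫ w, χ (x - δ • w) * ψS w‖ ≤ M := by
    intro x
    calc ‖∫ w, χ (x - δ • w) * ψS w‖ ≤ ∫ w, ‖χ (x - δ • w) * ψS w‖ :=
          norm_integral_le_integral_norm _
      _ ≤ ∫ w, ‖ψS w‖ := by
          refine integral_mono_of_nonneg (Filter.Eventually.of_forall fun w => norm_nonneg _)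
            ψS.integrable.norm (Filter.Eventually.of_forall fun w => ?_)
          calc ‖χ (x - δ • w) * ψS w‖ = ‖χ (x - δ • w)‖ * ‖ψS w‖ := norm_mul _ _
            _ ≤ 1 * ‖ψS w‖ := by gcongr; exact hχle _
            _ = ‖ψS w‖ := one_mul _
      _ = M := rfl
  have hfun : ∀ x, ‖𝓕⁻ (fun ξ => φ (δ • ξ) * 𝓕 χ ξ) x‖ ≤
      ‖(thickening δ (frontier E)).indicator (fun _ => (M:ℂ)) x‖ := by
    intro x
    by_cases hx : x ∈ thickening δ (frontier E)
    · rw [Set.indicator_of_mem hx, key x]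
      have hM : ‖(M:ℂ)‖ = M := by
        rw [Complex.norm_real, Real.norm_eq_abs, abs_of_nonneg hM0]
      rw [hM]; exact hbound x
    · rw [Set.indicator_of_notMem hx, key x, hvanish x hx]
  have hp0 : (ENNReal.ofReal p) ≠ 0 := by
    simp only [ne_eq, ENNReal.ofReal_eq_zero, not_le]; linarith
  calc eLpNorm (𝓕⁻ (fun ξ => φ (δ • ξ) * 𝓕 χ ξ)) (ENNReal.ofReal p) volume
      ≤ eLpNorm ((thickening δ (frontier E)).indicator (fun _ => (M:ℂ)))
          (ENNReal.ofReal p) volume := eLpNorm_mono hfun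
    _ = ‖(M:ℂ)‖ₑ * volume (thickening δ (frontier E)) ^ (1/p) := by
        rw [eLpNorm_indicator_const isOpen_thickening.measurableSet hp0 ENNReal.ofReal_ne_top,
          ENNReal.toReal_ofReal (by linarith)]
    _ ≤ ENNReal.ofReal (M + 1) * volume (thickening δ (frontier E)) ^ (1/p) := by
        gcongr
        rw [← ofReal_norm, Complex.norm_real, Real.norm_eq_abs,
          abs_of_nonneg hM0]
        exact ENNReal.ofReal_le_ofReal (by linarith)
end

section
/- Let E ⊂ ℝ^d be a bounded domain, let φ be Schwartz with φ^∨ supported in B₁(0) and ∫φ^∨ = 0, and define P_k by (P_k f)^ = φ²(2^{−k}·) f̂. Then for 1 ≤ p < ∞ and all integers k, ‖P_k χ_E‖_{L^p} ≲ |(∂E)_{2^{−k+1}}|^{1/p}. -/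
open MeasureTheory FourierTransform Metric

open Real
open scoped RealInnerProductSpace

variable {V : Type*} [NormedAddCommGroup V] [InnerProductSpace ℝ V] [FiniteDimensional ℝ V]
  [MeasurableSpace V] [BorelSpace V]

lemma key (f g : V → ℂ) (hf : Integrable f) (hg : Integrable g) (x : V) :
    𝓕⁻ (fun ξ => 𝓕 f ξ * g ξ) x = ∫ y, f y * 𝓕⁻ g (x - y) := by
  have hmeas : Integrable (fun z : V × V => (𝐞 ⟪z.1, x - z.2⟫ : ℂ) * (g z.1 * f z.2))
      (volume.prod volume) := by
    apply Integrable.bdd_mul (c := 1)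
    · exact (hg.mul_prod hf)
    · apply Continuous.aestronglyMeasurable
      continuity
    · exact Filter.Eventually.of_forall fun z => le_of_eq (Circle.norm_coe _)
  have hchar : ∀ (ξ y : V), (𝐞 ⟪ξ, x⟫ : ℂ) * (𝐞 (-⟪y, ξ⟫) : ℂ) = (𝐞 ⟪ξ, x - y⟫ : ℂ) := by
    intro ξ y
    rw [← Circle.coe_mul, ← AddChar.map_add_eq_mul]
    congr 2
    rw [inner_sub_right, real_inner_comm y ξ]
    ring
  have step1 : ∀ ξ : V, (𝐞 ⟪ξ, x⟫ : Circle) • ((𝓕 f ξ) * g ξ)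
      = ∫ y, (𝐞 ⟪ξ, x - y⟫ : ℂ) * (g ξ * f y) := by
    intro ξ
    rw [Real.fourier_eq, ← integral_mul_const, Circle.smul_def, smul_eq_mul, ← integral_const_mul]
    congr 1; ext y
    simp only [Circle.smul_def, smul_eq_mul, ← hchar ξ y]
    ring
  calc 𝓕⁻ (fun ξ => 𝓕 f ξ * g ξ) x
      = ∫ ξ, ∫ y, (𝐞 ⟪ξ, x - y⟫ : ℂ) * (g ξ * f y) := by
        rw [Real.fourierInv_eq]; exact integral_congr_ae (.of_forall step1)
    _ = ∫ y, ∫ ξ, (𝐞 ⟪ξ, x - y⟫ : ℂ) * (g ξ * f y) := integral_integral_swap hmeas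
    _ = ∫ y, f y * 𝓕⁻ g (x - y) := by
        congr 1; ext y
        rw [Real.fourierInv_eq, ← integral_const_mul]
        congr 1; ext ξ
        simp only [Circle.smul_def, smul_eq_mul]
        ring

lemma my_htg (f : SchwartzMap V ℂ) : Function.HasTemperateGrowth ⇑f := by
  refine ⟨f.smooth', fun n => ?_⟩
  obtain ⟨C, hC⟩ := f.decay 0 n
  exact ⟨0, C, fun x => by simpa using hC.2 x⟩

lemma fourierInv_comp_smul (w : V → ℂ) (c : ℝ) (hc : c ≠ 0) (x : V) :
    𝓕⁻ (fun ξ => w (c • ξ)) x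
      = |(c ^ (Module.finrank ℝ V))⁻¹| • 𝓕⁻ w (c⁻¹ • x) := by
  rw [Real.fourierInv_eq]
  have h : ∀ ξ : V, (𝐞 ⟪ξ, x⟫ : Circle) • w (c • ξ)
      = (fun η => (𝐞 ⟪η, c⁻¹ • x⟫ : Circle) • w η) (c • ξ) := by
    intro ξ
    simp only
    congr 2
    rw [real_inner_smul_left, real_inner_smul_right]
    field_simp
  calc ∫ ξ, (𝐞 ⟪ξ, x⟫ : Circle) • w (c • ξ)
      = ∫ ξ, (fun η => (𝐞 ⟪η, c⁻¹ • x⟫ : Circle) • w η) (c • ξ) :=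
        integral_congr_ae (Filter.Eventually.of_forall h)
    _ = |(c ^ Module.finrank ℝ V)⁻¹| • ∫ η, (𝐞 ⟪η, c⁻¹ • x⟫ : Circle) • w η :=
        MeasureTheory.Measure.integral_comp_smul volume
          (fun η => (𝐞 ⟪η, c⁻¹ • x⟫ : Circle) • w η) c
    _ = |(c ^ Module.finrank ℝ V)⁻¹| • 𝓕⁻ w (c⁻¹ • x) := by
        rw [Real.fourierInv_eq]

lemma bound_lemma (E : Set V) (hEopen : IsOpen E)
    (ψ : V → ℂ) (hψint : Integrable ψ) (hψ0 : (∫ z, ψ z) = 0)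
    (r : ℝ) (hsupp : ∀ z : V, r ≤ ‖z‖ → ψ z = 0) (x : V) :
    ‖∫ y, E.indicator (fun _ => (1:ℂ)) y * ψ (x - y)‖
      ≤ (thickening r (frontier E)).indicator (fun _ => ∫ z, ‖ψ z‖) x := by
  by_cases hx : x ∈ thickening r (frontier E)
  · rw [Set.indicator_of_mem hx]
    calc ‖∫ y, E.indicator (fun _ => (1:ℂ)) y * ψ (x - y)‖
        ≤ ∫ y, ‖E.indicator (fun _ => (1:ℂ)) y * ψ (x - y)‖ := norm_integral_le_integral_norm _
      _ ≤ ∫ y, ‖ψ (x - y)‖ := by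
          apply integral_mono_of_nonneg (Filter.Eventually.of_forall fun y => norm_nonneg _)
            (hψint.norm.comp_sub_left x)
          apply Filter.Eventually.of_forall
          intro y
          show ‖E.indicator (fun _ => (1:ℂ)) y * ψ (x - y)‖ ≤ ‖ψ (x - y)‖
          rw [norm_mul]
          have h1 : ‖E.indicator (fun _ => (1:ℂ)) y‖ ≤ 1 := by
            by_cases hy : y ∈ E <;>
              simp [Set.indicator_of_mem, Set.indicator_of_notMem, hy]
          nlinarith [norm_nonneg (ψ (x - y))]
      _ = ∫ z, ‖ψ z‖ := integral_sub_left_eq_self (fun z => ‖ψ z‖) volume x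
  · rw [Set.indicator_of_notMem hx]
    have hball : ∀ y ∈ ball x r, y ∉ frontier E := by
      intro y hy hyf
      exact hx (mem_thickening_iff.2 ⟨y, hyf, mem_ball'.1 hy⟩)
    have hsub : ball x r ⊆ E ∪ (closure E)ᶜ := by
      intro y hy
      rcases em (y ∈ closure E) with h | h
      · left
        by_contra hyE
        exact hball y hy ⟨h, by rwa [hEopen.interior_eq]⟩
      · right; exact h
    have hdisj : Disjoint E (closure E)ᶜ :=
      Set.disjoint_left.mpr fun a ha hc => hc (subset_closure ha)
    rcases (convex_ball x r).isPreconnected.subset_or_subset hEopen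
        isClosed_closure.isOpen_compl hdisj hsub with hbE | hbC
    · have heq : ∀ y, E.indicator (fun _ => (1:ℂ)) y * ψ (x - y) = ψ (x - y) := by
        intro y
        rcases em (ψ (x - y) = 0) with h0 | h0
        · rw [h0, mul_zero]
        · have hn : ‖x - y‖ < r := lt_of_not_ge fun h => h0 (hsupp _ h)
          have hyb : y ∈ ball x r := by
            rw [mem_ball, dist_eq_norm, ← neg_sub x y, norm_neg]; exact hn
          rw [Set.indicator_of_mem (hbE hyb), one_mul]
      have h2 : (∫ y, E.indicator (fun _ => (1:ℂ)) y * ψ (x - y)) = ∫ z, ψ z := by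
        rw [integral_congr_ae (Filter.Eventually.of_forall heq)]
        exact integral_sub_left_eq_self ψ volume x
      rw [h2, hψ0, norm_zero]
    · have heq : ∀ y, E.indicator (fun _ => (1:ℂ)) y * ψ (x - y) = 0 := by
        intro y
        rcases em (ψ (x - y) = 0) with h0 | h0
        · rw [h0, mul_zero]
        · have hn : ‖x - y‖ < r := lt_of_not_ge fun h => h0 (hsupp _ h)
          have hyb : y ∈ ball x r := by
            rw [mem_ball, dist_eq_norm, ← neg_sub x y, norm_neg]; exact hn
          rw [Set.indicator_of_notMem (fun hyE => hbC hyb (subset_closure hyE)), zero_mul]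
      rw [integral_congr_ae (Filter.Eventually.of_forall heq), integral_zero, norm_zero]


/-- With `E` a bounded domain, `φ` Schwartz with `φ^∨` supported in `B₁(0)` and
`∫ φ^∨ = 0`, and `P_k` defined by `(P_k f)^ = φ²(2^{-k}·) f̂`, one has for `1 ≤ p < ∞` and
all `k ∈ ℤ`: `‖P_k χ_E‖_p ≲ |(∂E)_{2^{-k+1}}|^{1/p}`. -/
theorem stmt5 (d : ℕ) (hd : 0 < d) (p : ℝ) (hp : 1 ≤ p)
    (E : Set (EuclideanSpace ℝ (Fin d)))
    (hEopen : IsOpen E) (hEconn : IsConnected E) (hEbdd : Bornology.IsBounded E)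
    (φ : SchwartzMap (EuclideanSpace ℝ (Fin d)) ℂ)
    (hsupp : Function.support (𝓕⁻ (⇑φ)) ⊆ Metric.ball 0 1)
    (hmean : (∫ x : EuclideanSpace ℝ (Fin d), 𝓕⁻ (⇑φ) x) = 0) :
    ∃ C : ℝ, 0 < C ∧ ∀ k : ℤ,
      eLpNorm (𝓕⁻ (fun ξ : EuclideanSpace ℝ (Fin d) =>
          (φ ((2:ℝ) ^ (-k) • ξ)) ^ 2 * 𝓕 (E.indicator fun _ => (1:ℂ)) ξ))
        (ENNReal.ofReal p) volume
        ≤ ENNReal.ofReal C *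
          (volume (thickening ((2:ℝ) ^ (-k + 1)) (frontier E))) ^ (1/p) := by
  classical
  have hφint : Integrable ⇑φ := φ.integrable
  have hFφint : Integrable (𝓕 ⇑φ) := by
    exact (𝓕 φ).integrable
  have hΦint : Integrable (𝓕⁻ ⇑φ) := by
    have h := (𝓕⁻ φ : SchwartzMap (EuclideanSpace ℝ (Fin d)) ℂ).integrable (μ := volume); rwa [SchwartzMap.fourierInv_coe] at h
  have hinvφ : 𝓕 (𝓕⁻ ⇑φ) = ⇑φ :=
    Continuous.fourier_fourierInv_eq φ.continuous hφint hFφint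
  have hφ0 : φ 0 = (0:ℂ) := by
    have h := congrFun hinvφ 0
    rw [Real.fourier_eq] at h
    simp only [inner_zero_right, neg_zero, AddChar.map_zero_eq_one, one_smul] at h
    rw [← h, hmean]
  let w : SchwartzMap (EuclideanSpace ℝ (Fin d)) ℂ :=
    SchwartzMap.bilinLeftCLM (ContinuousLinearMap.mul ℝ ℂ) (my_htg φ) φ
  have hw : ∀ ξ, w ξ = φ ξ * φ ξ := fun ξ => rfl
  have hwint : Integrable ⇑w := w.integrable
  have hFwint : Integrable (𝓕 ⇑w) := by
    exact (𝓕 w).integrable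
  have hχint : Integrable (𝓕⁻ ⇑w) := by
    have h := (𝓕⁻ w : SchwartzMap (EuclideanSpace ℝ (Fin d)) ℂ).integrable (μ := volume); rwa [SchwartzMap.fourierInv_coe] at h
  have hinvw : 𝓕 (𝓕⁻ ⇑w) = ⇑w :=
    Continuous.fourier_fourierInv_eq w.continuous hwint hFwint
  have hχ0 : (∫ z, 𝓕⁻ ⇑w z) = 0 := by
    have h := congrFun hinvw 0
    rw [Real.fourier_eq] at h
    simp only [inner_zero_right, neg_zero, AddChar.map_zero_eq_one, one_smul] at h
    rw [h, hw 0, hφ0, mul_zero]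
  have hχconv : ∀ x, 𝓕⁻ ⇑w x = ∫ y, (𝓕⁻ ⇑φ) y * (𝓕⁻ ⇑φ) (x - y) := by
    intro x
    have hfun : ⇑w = fun ξ => 𝓕 (𝓕⁻ ⇑φ) ξ * φ ξ := by
      ext ξ; rw [hinvφ, hw]
    rw [hfun]
    exact key (𝓕⁻ ⇑φ) ⇑φ hΦint hφint x
  have hχsupp : ∀ z : EuclideanSpace ℝ (Fin d), 2 ≤ ‖z‖ → 𝓕⁻ ⇑w z = 0 := by
    intro z hz
    rw [hχconv z]
    have hzero : ∀ y, (𝓕⁻ ⇑φ) y * (𝓕⁻ ⇑φ) (z - y) = 0 := by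
      intro y
      rcases em ((𝓕⁻ ⇑φ) y = 0) with h | h
      · rw [h, zero_mul]
      · have h1 : ‖y‖ < 1 := by
          have h1' := hsupp (Function.mem_support.2 h)
          rwa [mem_ball, dist_zero_right] at h1'
        have h2 : (𝓕⁻ ⇑φ) (z - y) = 0 := by
          by_contra h2
          have h2' := hsupp (Function.mem_support.2 h2)
          rw [mem_ball, dist_zero_right] at h2'
          have h3 : ‖z‖ ≤ ‖z - y‖ + ‖y‖ := by
            simpa using norm_add_le (z - y) y
          linarith
        rw [h2, mul_zero]
    rw [integral_congr_ae (Filter.Eventually.of_forall hzero), integral_zero]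
  set M : ℝ := ∫ z, ‖𝓕⁻ ⇑w z‖ with hMdef
  have hM0 : 0 ≤ M := integral_nonneg fun z => norm_nonneg _
  refine ⟨M + 1, by linarith, fun k => ?_⟩
  set c : ℝ := (2:ℝ) ^ (-k) with hcdef
  have hcpos : 0 < c := zpow_pos two_pos _
  have hc : c ≠ 0 := ne_of_gt hcpos
  set D := Module.finrank ℝ (EuclideanSpace ℝ (Fin d)) with hDdef
  have haD : 0 < c ^ D := pow_pos hcpos D
  set u : EuclideanSpace ℝ (Fin d) → ℂ := fun ξ => w (c • ξ) with hudef
  have huint : Integrable u := hwint.comp_smul hc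
  set ψ : EuclideanSpace ℝ (Fin d) → ℂ := 𝓕⁻ u with hψdef
  have hψeq : ∀ x, ψ x = |(c ^ D)⁻¹| • (𝓕⁻ ⇑w) (c⁻¹ • x) := fun x =>
    fourierInv_comp_smul ⇑w c hc x
  have hψint : Integrable ψ := by
    have h1 := (hχint.comp_smul (R := c⁻¹) (inv_ne_zero hc)).smul (|(c ^ D)⁻¹|)
    have h2 : ψ = fun x => |(c ^ D)⁻¹| • (𝓕⁻ ⇑w) (c⁻¹ • x) := funext hψeq
    rw [h2]; exact h1
  have hψ0 : (∫ z, ψ z) = 0 := by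
    simp only [hψeq]
    rw [integral_smul, MeasureTheory.Measure.integral_comp_smul volume (𝓕⁻ ⇑w) c⁻¹,
      hχ0, smul_zero, smul_zero]
  have hψnorm : (∫ z, ‖ψ z‖) = M := by
    simp only [hψeq]
    have hnz : ∀ z : EuclideanSpace ℝ (Fin d),
        ‖|(c ^ D)⁻¹| • (𝓕⁻ ⇑w) (c⁻¹ • z)‖ = (c ^ D)⁻¹ * ‖(𝓕⁻ ⇑w) (c⁻¹ • z)‖ := by
      intro z
      rw [norm_smul, Real.norm_eq_abs, abs_abs, abs_of_pos (inv_pos.2 haD)]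
    simp only [hnz]
    rw [MeasureTheory.integral_const_mul,
      MeasureTheory.Measure.integral_comp_smul volume (fun z => ‖(𝓕⁻ ⇑w : EuclideanSpace ℝ (Fin d) → ℂ) z‖) c⁻¹,
      inv_pow, inv_inv, abs_of_pos haD, smul_eq_mul, ← hMdef]
    field_simp
  have hψsupp : ∀ z, 2 * c ≤ ‖z‖ → ψ z = 0 := by
    intro z hz
    rw [hψeq z]
    have h5 : (2:ℝ) ≤ ‖c⁻¹ • z‖ := by
      rw [norm_smul, Real.norm_eq_abs, abs_of_pos (inv_pos.2 hcpos)]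
      have h4 : c⁻¹ * (2*c) ≤ c⁻¹ * ‖z‖ :=
        mul_le_mul_of_nonneg_left hz (inv_pos.2 hcpos).le
      have h4' : c⁻¹ * (2*c) = 2 := by field_simp
      linarith
    rw [hχsupp _ h5, smul_zero]
  have hind : Integrable (E.indicator fun _ => (1:ℂ)) := by
    rw [integrable_indicator_iff hEopen.measurableSet]
    exact integrableOn_const hEbdd.measure_lt_top.ne
  have hFeq : ∀ x, 𝓕⁻ (fun ξ : EuclideanSpace ℝ (Fin d) =>
      (φ (c • ξ))^2 * 𝓕 (E.indicator fun _ => (1:ℂ)) ξ) x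
      = ∫ y, E.indicator (fun _ => (1:ℂ)) y * ψ (x - y) := by
    intro x
    have hfun : (fun ξ : EuclideanSpace ℝ (Fin d) =>
        (φ (c • ξ))^2 * 𝓕 (E.indicator fun _ => (1:ℂ)) ξ)
        = fun ξ => 𝓕 (E.indicator fun _ => (1:ℂ)) ξ * u ξ := by
      ext ξ
      rw [hudef]
      simp only
      rw [hw, sq]
      ring
    rw [hfun]
    exact key _ u hind huint x
  have hbd : ∀ x, ‖𝓕⁻ (fun ξ : EuclideanSpace ℝ (Fin d) =>
      (φ (c • ξ))^2 * 𝓕 (E.indicator fun _ => (1:ℂ)) ξ) x‖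
      ≤ ‖(thickening (2*c) (frontier E)).indicator (fun _ => M) x‖ := by
    intro x
    rw [hFeq x]
    have h6 := bound_lemma E hEopen ψ hψint hψ0 (2*c) hψsupp x
    rw [hψnorm] at h6
    exact h6.trans (Real.le_norm_self _)
  have h7 : (2:ℝ) ^ (-k + 1) = 2 * c := by
    rw [hcdef, show (-k+1 : ℤ) = 1 + -k by ring,
      zpow_add₀ (two_ne_zero : (2:ℝ) ≠ 0), zpow_one]
  have hp0 : (ENNReal.ofReal p) ≠ 0 :=
    ne_of_gt (ENNReal.ofReal_pos.2 (by linarith))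
  have hptop : (ENNReal.ofReal p) ≠ ⊤ := ENNReal.ofReal_ne_top
  rw [h7]
  calc eLpNorm (𝓕⁻ (fun ξ : EuclideanSpace ℝ (Fin d) =>
          (φ (c • ξ))^2 * 𝓕 (E.indicator fun _ => (1:ℂ)) ξ)) (ENNReal.ofReal p) volume
      ≤ eLpNorm ((thickening (2*c) (frontier E)).indicator (fun _ => M))
          (ENNReal.ofReal p) volume := eLpNorm_mono hbd
    _ = ‖M‖₊ * (volume (thickening (2*c) (frontier E))) ^ (1 / (ENNReal.ofReal p).toReal) :=
        eLpNorm_indicator_const isOpen_thickening.measurableSet hp0 hptop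
    _ ≤ ENNReal.ofReal (M + 1) * (volume (thickening (2*c) (frontier E))) ^ (1/p) := by
        rw [ENNReal.toReal_ofReal (by linarith : (0:ℝ) ≤ p)]
        apply mul_le_mul_left
        rw [← enorm_eq_nnnorm, Real.enorm_eq_ofReal hM0]
        exact ENNReal.ofReal_le_ofReal (by linarith)
end

section
/- Let 0 < s < 1, 1 ≤ q < ∞, and let E ⊂ ℝ^d be measurable with |E| < ∞. If ∫₀¹ δ^{−qs} |(∂E)_δ| dδ/δ < ∞, then χ_E belongs to the fractional Sobolev space W^q_s(ℝ^d). -/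
open MeasureTheory Metric

open scoped ENNReal NNReal
open Set

lemma aux_cross {Y : Type*} [NormedAddCommGroup Y] [NormedSpace ℝ Y]
    {E : Set Y} {x y : Y} (hx : x ∈ E) (hy : y ∉ E) :
    ∃ z ∈ frontier E, dist x z ≤ dist x y ∧ dist y z ≤ dist x y := by
  have hconn : IsPreconnected (segment ℝ x y) := (convex_segment x y).isPreconnected
  haveI : PreconnectedSpace (segment ℝ x y) := Subtype.preconnectedSpace hconn
  have hne : (frontier (Subtype.val ⁻¹' E : Set (segment ℝ x y))).Nonempty := by
    rw [nonempty_frontier_iff]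
    refine ⟨⟨⟨x, left_mem_segment ℝ x y⟩, hx⟩, fun h => hy ?_⟩
    have : (⟨y, right_mem_segment ℝ x y⟩ : segment ℝ x y) ∈ (Subtype.val ⁻¹' E : Set (segment ℝ x y)) := by
      rw [h]; trivial
    exact this
  obtain ⟨z, hz⟩ := hne
  have hzf : (z : Y) ∈ frontier E := continuous_subtype_val.frontier_preimage_subset E hz
  obtain ⟨a, b, ha, hb, hab, hzeq⟩ := z.2
  have hb1 : a = 1 - b := by linarith
  have h1 : (z : Y) - x = b • (y - x) := by
    rw [← hzeq, hb1]; module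
  have h2 : (z : Y) - y = a • (x - y) := by
    rw [← hzeq, hb1]; module
  refine ⟨z, hzf, ?_, ?_⟩
  · rw [dist_comm, dist_eq_norm, h1, norm_smul, Real.norm_eq_abs, abs_of_nonneg hb,
      dist_eq_norm' x y]
    nlinarith [norm_nonneg (y - x)]
  · rw [dist_comm y _, dist_eq_norm, h2, norm_smul, Real.norm_eq_abs, abs_of_nonneg ha,
      dist_eq_norm x y, ← norm_neg (x - y), neg_sub]
    nlinarith [norm_nonneg (y - x)]

lemma aux_subset {Y : Type*} [NormedAddCommGroup Y] [NormedSpace ℝ Y]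
    (E : Set Y) (t : Y) {δ : ℝ} (hδ : ‖t‖ < δ) :
    symmDiff ((fun x => x + t) ⁻¹' E) E ⊆ thickening δ (frontier E) := by
  intro x hx
  rw [Set.mem_symmDiff] at hx
  have : ∃ z ∈ frontier E, dist x z ≤ ‖t‖ := by
    rcases hx with ⟨h1, h2⟩ | ⟨h1, h2⟩
    · obtain ⟨z, hz, _, hd⟩ := aux_cross (x := x + t) (y := x) h1 h2
      refine ⟨z, hz, ?_⟩
      have he : dist (x + t) x = ‖t‖ := by rw [dist_eq_norm]; simp
      rwa [he] at hd
    · obtain ⟨z, hz, hd, _⟩ := aux_cross (x := x) (y := x + t) h1 h2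
      refine ⟨z, hz, ?_⟩
      have he : dist x (x + t) = ‖t‖ := by rw [dist_eq_norm]; simp
      rwa [he] at hd
  obtain ⟨z, hz, hd⟩ := this
  exact mem_thickening_iff.2 ⟨z, hz, lt_of_le_of_lt hd hδ⟩

lemma aux_rpow_bound {a r : ℝ} (ha : 0 < a) (hr : 0 < r) (hr2 : r < 1/2) :
    ENNReal.ofReal (r ^ (-a)) ≤ ENNReal.ofReal (2 ^ (a+1)) *
      ∫⁻ δ in Set.Ioo r 1, ENNReal.ofReal (δ ^ (-a-1)) := by
  have key : ENNReal.ofReal (2 ^ (-a-1) * r ^ (-a)) ≤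
      ∫⁻ δ in Set.Ioo r 1, ENNReal.ofReal (δ ^ (-a-1)) := by
    have h1 : ENNReal.ofReal (2 ^ (-a-1) * r ^ (-a)) =
        ENNReal.ofReal ((2*r) ^ (-a-1)) * volume (Set.Ioo r (2*r)) := by
      rw [Real.volume_Ioo, ← ENNReal.ofReal_mul (by positivity)]
      congr 1
      have h2r : 2 * r - r = r := by ring
      rw [h2r, Real.mul_rpow (by norm_num) hr.le, mul_assoc]
      congr 1
      conv_lhs => rw [show (-a : ℝ) = (-a-1)+1 by ring]
      rw [Real.rpow_add_one hr.ne']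
    rw [h1, ← setLIntegral_const]
    refine le_trans (setLIntegral_mono' measurableSet_Ioo ?_) (lintegral_mono_set ?_)
    · intro x hx
      exact ENNReal.ofReal_le_ofReal
        (Real.rpow_le_rpow_of_nonpos (hr.trans hx.1) hx.2.le (by linarith))
    · intro x hx
      exact ⟨hx.1, by linarith [hx.2]⟩
  calc ENNReal.ofReal (r ^ (-a)) =
      ENNReal.ofReal (2 ^ (a+1)) * ENNReal.ofReal (2 ^ (-a-1) * r ^ (-a)) := by
        rw [← ENNReal.ofReal_mul (by positivity), ← mul_assoc,
          ← Real.rpow_add (by norm_num : (0:ℝ) < 2)]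
        ring_nf
        simp
    _ ≤ _ := by gcongr

/-- Let `0 < s < 1`, `1 ≤ q < ∞`, and `E ⊂ ℝ^d` measurable with `|E| < ∞`.
If `∫₀¹ δ^{-qs} |(∂E)_δ| dδ/δ < ∞`, then `χ_E ∈ W^q_s(ℝ^d)`, i.e. `χ_E ∈ L^q` and the
Gagliardo seminorm `∫ ‖χ_E(·+t) - χ_E‖_q^q / |t|^{d+qs} dt` is finite. -/
theorem stmt11 (d : ℕ) (hd : 0 < d) (s q : ℝ) (hs0 : 0 < s) (hs1 : s < 1) (hq : 1 ≤ q)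
    (E : Set (EuclideanSpace ℝ (Fin d))) (hmeas : MeasurableSet E) (hfin : volume E < ⊤)
    (hint : (∫⁻ δ in Set.Ioo (0:ℝ) 1, ENNReal.ofReal (δ ^ (-(q * s) - 1)) *
        volume (thickening δ (frontier E))) < ⊤) :
    MemLp (E.indicator fun _ => (1:ℝ)) (ENNReal.ofReal q) volume ∧
    (∫⁻ t : EuclideanSpace ℝ (Fin d),
        (eLpNorm (fun x => (E.indicator fun _ => (1:ℝ)) (x + t) -
            (E.indicator fun _ => (1:ℝ)) x) (ENNReal.ofReal q) volume) ^ q /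
          ENNReal.ofReal (‖t‖ ^ ((d:ℝ) + q * s))) < ⊤ := by
  have hq0 : (0:ℝ) < q := lt_of_lt_of_le one_pos hq
  set p : ℝ≥0∞ := ENNReal.ofReal q with hp
  have hp0 : p ≠ 0 := (ENNReal.ofReal_pos.2 hq0).ne'
  have hpt : p ≠ ⊤ := ENNReal.ofReal_ne_top
  have hptr : p.toReal = q := ENNReal.toReal_ofReal hq0.le
  set a : ℝ := (d:ℝ) + q * s with ha
  have ha0 : 0 < a := by positivity
  set F : Set (EuclideanSpace ℝ (Fin d)) := frontier E with hF
  set S : EuclideanSpace ℝ (Fin d) → Set (EuclideanSpace ℝ (Fin d)) := fun t => symmDiff ((fun x => x + t) ⁻¹' E) E with hSdef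
  have hSmeas : ∀ t, MeasurableSet (S t) :=
    fun t => ((measurable_add_const t) hmeas).symmDiff hmeas
  have hSle : ∀ t, volume (S t) ≤ 2 * volume E := by
    intro t
    refine le_trans (measure_mono symmDiff_subset_union) ?_
    refine le_trans (measure_union_le _ _) ?_
    rw [measure_preimage_add_right, two_mul]
  have hSfin : ∀ t, volume (S t) ≠ ⊤ := by
    intro t
    exact (lt_of_le_of_lt (hSle t)
      (ENNReal.mul_lt_top (by norm_num) hfin)).ne
  have key : ∀ t, eLpNorm (fun x => (E.indicator fun _ => (1:ℝ)) (x + t) -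
      (E.indicator fun _ => (1:ℝ)) x) p volume ^ q = volume (S t) := by
    intro t
    have h1 : eLpNorm (fun x => (E.indicator fun _ => (1:ℝ)) (x + t) -
        (E.indicator fun _ => (1:ℝ)) x) p volume
        = eLpNorm ((S t).indicator fun _ => (1:ℝ)) p volume := by
      apply eLpNorm_congr_norm_ae
      refine Filter.Eventually.of_forall (fun x => ?_)
      by_cases h1 : x + t ∈ E <;> by_cases h2 : x ∈ E <;>
        simp [Set.indicator_apply, Set.mem_symmDiff, h1, h2, hSdef]
    rw [h1, eLpNorm_indicator_const (hSmeas t) hp0 hpt, hptr]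
    simp only [enorm_one, one_mul]
    rw [← ENNReal.rpow_mul, one_div, inv_mul_cancel₀ hq0.ne', ENNReal.rpow_one]
  refine ⟨memLp_indicator_const p hmeas 1 (Or.inr hfin.ne), ?_⟩
  -- the weight function
  set w : ℝ → ℝ≥0∞ := fun δ => volume (thickening δ F) * ENNReal.ofReal (δ ^ (-a-1)) with hw
  have hwm : Measurable w := by
    have h1 : Monotone fun δ : ℝ => volume (thickening δ F) :=
      fun d1 d2 h => measure_mono (thickening_mono h F)
    exact h1.measurable.mul ((measurable_id.pow measurable_const).ennreal_ofReal)
  set ψ : ℝ → ℝ≥0∞ := fun r => ∫⁻ δ in Set.Ioo (0:ℝ) 1, (Set.Ioi r).indicator w δ with hψ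
  have hψa : Antitone ψ := by
    intro r1 r2 h12
    exact lintegral_mono fun δ =>
      Set.indicator_le_indicator_of_subset (Set.Ioi_subset_Ioi h12) (fun _ => zero_le) δ
  set G : EuclideanSpace ℝ (Fin d) → ℝ≥0∞ := fun t => ENNReal.ofReal (2 ^ (a+1)) * ψ ‖t‖ +
    (2 * volume E * ENNReal.ofReal (3 ^ a)) * ENNReal.ofReal ((1+‖t‖) ^ (-a)) with hG
  have hdiv : ∀ t : EuclideanSpace ℝ (Fin d), t ≠ 0 → volume (S t) / ENNReal.ofReal (‖t‖ ^ a)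
      = volume (S t) * ENNReal.ofReal (‖t‖ ^ (-a)) := by
    intro t ht0
    have hn0 : (0:ℝ) < ‖t‖ := norm_pos_iff.2 ht0
    rw [div_eq_mul_inv, Real.rpow_neg hn0.le, ENNReal.ofReal_inv_of_pos (by positivity)]
  have hpoint : ∀ t : EuclideanSpace ℝ (Fin d), volume (S t) / ENNReal.ofReal (‖t‖ ^ a) ≤ G t := by
    intro t
    rcases lt_or_ge ‖t‖ (1/2) with hlt | hge
    · rcases eq_or_ne t 0 with rfl | ht0
      · have hS0 : S 0 = symmDiff E E := by
          simp [hSdef]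
        rw [hS0]
        simp
      · have hn0 : (0:ℝ) < ‖t‖ := norm_pos_iff.2 ht0
        rw [hdiv t ht0]
        refine le_trans ?_ le_self_add
        calc volume (S t) * ENNReal.ofReal (‖t‖ ^ (-a))
            ≤ volume (S t) * (ENNReal.ofReal (2 ^ (a+1)) *
              ∫⁻ δ in Set.Ioo ‖t‖ 1, ENNReal.ofReal (δ ^ (-a-1))) := by
              gcongr
              exact aux_rpow_bound ha0 hn0 hlt
          _ = ENNReal.ofReal (2 ^ (a+1)) *
              ∫⁻ δ in Set.Ioo ‖t‖ 1, volume (S t) * ENNReal.ofReal (δ ^ (-a-1)) := by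
              rw [lintegral_const_mul' (volume (S t)) _ (hSfin t), ← mul_assoc, ← mul_assoc,
                mul_comm (volume (S t))]
          _ ≤ ENNReal.ofReal (2 ^ (a+1)) * ∫⁻ δ in Set.Ioo ‖t‖ 1, w δ := by
              refine mul_le_mul_right (setLIntegral_mono' measurableSet_Ioo fun δ hδ => ?_) _
              exact mul_le_mul_left (measure_mono (aux_subset E t hδ.1)) _
          _ ≤ ENNReal.ofReal (2 ^ (a+1)) * ψ ‖t‖ := by
              refine mul_le_mul_right ?_ _
              have h1 : ∫⁻ δ in Set.Ioo ‖t‖ 1, w δ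
                  ≤ ∫⁻ δ in Set.Ioi ‖t‖ ∩ Set.Ioo (0:ℝ) 1, w δ :=
                lintegral_mono_set (fun δ hδ => ⟨hδ.1, lt_trans hn0 hδ.1, hδ.2⟩)
              refine h1.trans (le_of_eq ?_)
              show _ = ∫⁻ δ in Set.Ioo (0:ℝ) 1, (Set.Ioi ‖t‖).indicator w δ
              rw [lintegral_indicator measurableSet_Ioi,
                Measure.restrict_restrict measurableSet_Ioi]
    · have hn0 : (0:ℝ) < ‖t‖ := lt_of_lt_of_le (by norm_num) hge
      have ht0 : t ≠ 0 := by
        intro h; rw [h] at hn0; simp at hn0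
      have hreal : ‖t‖ ^ (-a) ≤ 3 ^ a * (1+‖t‖) ^ (-a) := by
        have hA : (0:ℝ) < ‖t‖ ^ a := by positivity
        have hB : (0:ℝ) < (1+‖t‖) ^ a := by positivity
        have h1 : (1+‖t‖) ^ a ≤ 3 ^ a * ‖t‖ ^ a := by
          rw [← Real.mul_rpow (by norm_num) (norm_nonneg t)]
          exact Real.rpow_le_rpow (by positivity) (by linarith) ha0.le
        rw [Real.rpow_neg hn0.le, Real.rpow_neg (by positivity)]
        calc (‖t‖ ^ a)⁻¹ = (‖t‖ ^ a)⁻¹ * ((1+‖t‖) ^ a * ((1+‖t‖) ^ a)⁻¹) := by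
              rw [mul_inv_cancel₀ hB.ne', mul_one]
          _ ≤ (‖t‖ ^ a)⁻¹ * ((3 ^ a * ‖t‖ ^ a) * ((1+‖t‖) ^ a)⁻¹) := by gcongr
          _ = 3 ^ a * ((1+‖t‖) ^ a)⁻¹ := by field_simp
      rw [hdiv t ht0]
      refine le_trans ?_ le_add_self
      calc volume (S t) * ENNReal.ofReal (‖t‖ ^ (-a))
          ≤ (2 * volume E) * ENNReal.ofReal (3 ^ a * (1+‖t‖) ^ (-a)) :=
            mul_le_mul' (hSle t) (ENNReal.ofReal_le_ofReal hreal)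
        _ = (2 * volume E * ENNReal.ofReal (3 ^ a)) * ENNReal.ofReal ((1+‖t‖) ^ (-a)) := by
            rw [ENNReal.ofReal_mul (by positivity)]
            ring
  haveI : Nontrivial (EuclideanSpace ℝ (Fin d)) := by
    have hfr : 0 < Module.finrank ℝ (EuclideanSpace ℝ (Fin d)) := by
      rw [finrank_euclideanSpace_fin]; exact hd
    exact Module.nontrivial_of_finrank_pos hfr
  have hGfin : (∫⁻ t, G t) < ⊤ := by
    have hψmeas : Measurable fun t : EuclideanSpace ℝ (Fin d) => ψ ‖t‖ := hψa.measurable.comp measurable_norm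
    have hsplit : (∫⁻ t, G t) = ENNReal.ofReal (2 ^ (a+1)) * (∫⁻ t : EuclideanSpace ℝ (Fin d), ψ ‖t‖) +
        (2 * volume E * ENNReal.ofReal (3 ^ a)) *
          ∫⁻ t : EuclideanSpace ℝ (Fin d), ENNReal.ofReal ((1+‖t‖) ^ (-a)) := by
      rw [hG, lintegral_add_left (hψmeas.const_mul _),
        lintegral_const_mul' _ _ ENNReal.ofReal_ne_top,
        lintegral_const_mul' _ _
          (ENNReal.mul_ne_top (ENNReal.mul_ne_top (by norm_num) hfin.ne) ENNReal.ofReal_ne_top)]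
    have hI1 : (∫⁻ t : EuclideanSpace ℝ (Fin d), ψ ‖t‖) ≤ volume (ball (0:EuclideanSpace ℝ (Fin d)) 1) *
        ∫⁻ δ in Set.Ioo (0:ℝ) 1, ENNReal.ofReal (δ ^ (-(q * s) - 1)) *
          volume (thickening δ F) := by
      have hmf : Measurable (Function.uncurry fun (t : EuclideanSpace ℝ (Fin d)) (δ : ℝ) =>
          (Set.Ioi ‖t‖).indicator w δ) := by
        have heq : (Function.uncurry fun (t : EuclideanSpace ℝ (Fin d)) (δ : ℝ) => (Set.Ioi ‖t‖).indicator w δ) =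
            {p2 : EuclideanSpace ℝ (Fin d) × ℝ | ‖p2.1‖ < p2.2}.indicator (fun p2 => w p2.2) := by
          funext p2
          by_cases h : ‖p2.1‖ < p2.2 <;>
            simp [Function.uncurry, Set.indicator_apply, h, Set.mem_Ioi]
        rw [heq]
        exact (hwm.comp measurable_snd).indicator
          (measurableSet_lt (measurable_fst.norm) measurable_snd)
      have hswap : (∫⁻ t : EuclideanSpace ℝ (Fin d), ψ ‖t‖) =
          ∫⁻ δ in Set.Ioo (0:ℝ) 1, ∫⁻ t : EuclideanSpace ℝ (Fin d), (Set.Ioi ‖t‖).indicator w δ := by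
        exact lintegral_lintegral_swap hmf.aemeasurable
      have hinner : ∀ δ : ℝ, (∫⁻ t : EuclideanSpace ℝ (Fin d), (Set.Ioi ‖t‖).indicator w δ)
          = w δ * volume (ball (0:EuclideanSpace ℝ (Fin d)) δ) := by
        intro δ
        have heq2 : (fun t : EuclideanSpace ℝ (Fin d) => (Set.Ioi ‖t‖).indicator w δ)
            = (ball (0:EuclideanSpace ℝ (Fin d)) δ).indicator (fun _ => w δ) := by
          funext t
          by_cases h : ‖t‖ < δ <;>
            simp [Set.indicator_apply, h, mem_ball_zero_iff, Set.mem_Ioi]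
        rw [heq2, lintegral_indicator_const measurableSet_ball]
      calc (∫⁻ t : EuclideanSpace ℝ (Fin d), ψ ‖t‖)
          = ∫⁻ δ in Set.Ioo (0:ℝ) 1, w δ * volume (ball (0:EuclideanSpace ℝ (Fin d)) δ) := by
            rw [hswap]; exact lintegral_congr hinner
        _ ≤ ∫⁻ δ in Set.Ioo (0:ℝ) 1, volume (ball (0:EuclideanSpace ℝ (Fin d)) 1) *
            (ENNReal.ofReal (δ ^ (-(q * s) - 1)) * volume (thickening δ F)) := by
            refine setLIntegral_mono' measurableSet_Ioo fun δ hδ => le_of_eq ?_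
            rw [Measure.addHaar_ball volume (0:EuclideanSpace ℝ (Fin d)) hδ.1.le]
            have hfr : Module.finrank ℝ (EuclideanSpace ℝ (Fin d)) = d := by rw [finrank_euclideanSpace_fin]
            rw [hfr, hw]
            have hdm : ENNReal.ofReal (δ ^ (-a-1)) * ENNReal.ofReal (δ ^ (d:ℕ))
                = ENNReal.ofReal (δ ^ (-(q * s) - 1)) := by
              rw [← ENNReal.ofReal_mul (Real.rpow_nonneg hδ.1.le _)]
              congr 1
              rw [← Real.rpow_natCast δ d, ← Real.rpow_add hδ.1]
              congr 1
              rw [ha]; ring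
            calc volume (thickening δ F) * ENNReal.ofReal (δ ^ (-a-1)) *
                (ENNReal.ofReal (δ ^ d) * volume (ball (0:EuclideanSpace ℝ (Fin d)) 1))
                = volume (ball (0:EuclideanSpace ℝ (Fin d)) 1) * ((ENNReal.ofReal (δ ^ (-a-1)) *
                    ENNReal.ofReal (δ ^ (d:ℕ))) * volume (thickening δ F)) := by ring
              _ = volume (ball (0:EuclideanSpace ℝ (Fin d)) 1) *
                  (ENNReal.ofReal (δ ^ (-(q * s) - 1)) * volume (thickening δ F)) := by
                  rw [hdm]
        _ = volume (ball (0:EuclideanSpace ℝ (Fin d)) 1) * ∫⁻ δ in Set.Ioo (0:ℝ) 1,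
            ENNReal.ofReal (δ ^ (-(q * s) - 1)) * volume (thickening δ F) :=
            lintegral_const_mul' _ _ measure_ball_lt_top.ne
    have hI2 : (∫⁻ t : EuclideanSpace ℝ (Fin d), ENNReal.ofReal ((1+‖t‖) ^ (-a))) < ⊤ := by
      have hint2 : Integrable (fun t : EuclideanSpace ℝ (Fin d) => (1+‖t‖) ^ (-a)) volume := by
        apply integrable_one_add_norm
        rw [finrank_euclideanSpace_fin, ha]
        nlinarith
      exact hint2.lintegral_lt_top
    rw [hsplit]
    refine ENNReal.add_lt_top.2 ⟨?_, ?_⟩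
    · refine ENNReal.mul_lt_top ENNReal.ofReal_lt_top ?_
      exact lt_of_le_of_lt hI1 (ENNReal.mul_lt_top measure_ball_lt_top hint)
    · refine ENNReal.mul_lt_top ?_ hI2
      exact ENNReal.mul_lt_top (ENNReal.mul_lt_top (by norm_num) hfin) ENNReal.ofReal_lt_top
  calc (∫⁻ t : EuclideanSpace ℝ (Fin d), (eLpNorm (fun x => (E.indicator fun _ => (1:ℝ)) (x + t) -
            (E.indicator fun _ => (1:ℝ)) x) p volume) ^ q /
          ENNReal.ofReal (‖t‖ ^ a))
      = ∫⁻ t : EuclideanSpace ℝ (Fin d), volume (S t) / ENNReal.ofReal (‖t‖ ^ a) :=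
        lintegral_congr fun t => by rw [key t]
    _ ≤ ∫⁻ t : EuclideanSpace ℝ (Fin d), G t := lintegral_mono hpoint
    _ < ⊤ := hGfin
end

section
/- Let p, d ≥ 1 and λ > 0, and suppose a family of measurable functions g_k : ℝ^d → [0,∞), k ∈ ℤ, satisfies ‖g_k‖_{L^1} ≤ A·2^{kγ/2} and ‖g_k‖_{L^2} ≤ A·2^{−k(d−γ)/2} for some 0 < γ < d and A > 0. Then the function G = ∑_{k∈ℤ} g_k satisfies |{x : G(x) > λ}| ≤ C A^{2d/(2d−γ)} λ^{−2d/(2d−γ)} for all λ > 0, i.e. G ∈ L^{2d/(2d−γ),∞}. -/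
open MeasureTheory
open scoped ENNReal NNReal

section Helpers
variable {α : Type*} [MeasurableSpace α] {μ : Measure α}

private lemma rpow_iSup' (a : ℕ → ℝ≥0∞) {y : ℝ} (hy : 0 < y) :
    (⨆ n, a n) ^ y = ⨆ n, a n ^ y := by
  have h := (ENNReal.orderIsoRpow y hy).map_iSup a
  simp only [ENNReal.orderIsoRpow_apply] at h
  exact h

private lemma markov1 (F : α → ℝ≥0∞) (hF : Measurable F) {t : ℝ} (ht : 0 < t) :
    μ {x | ENNReal.ofReal t < F x} ≤ (∫⁻ x, F x ∂μ) / ENNReal.ofReal t := by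
  have hsub : {x | ENNReal.ofReal t < F x} ⊆ {x | ENNReal.ofReal t ≤ F x} :=
    fun x (hx : ENNReal.ofReal t < F x) => le_of_lt hx
  exact le_trans (measure_mono hsub) (meas_ge_le_lintegral_div hF.aemeasurable
    (by simp [ht]) ENNReal.ofReal_ne_top)

private lemma markov2 (F : α → ℝ≥0∞) (hF : Measurable F) {t : ℝ} (ht : 0 < t) :
    μ {x | ENNReal.ofReal t < F x} ≤
      (∫⁻ x, F x ^ (2:ℝ) ∂μ) / ENNReal.ofReal t ^ (2:ℝ) := by
  have hsub : {x | ENNReal.ofReal t < F x} ⊆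
      {x | ENNReal.ofReal t ^ (2:ℝ) ≤ F x ^ (2:ℝ)} :=
    fun x hx => ENNReal.rpow_le_rpow (le_of_lt hx) (by norm_num)
  refine le_trans (measure_mono hsub) ?_
  refine meas_ge_le_lintegral_div
    (ENNReal.continuous_rpow_const.measurable.comp hF).aemeasurable ?_ ?_
  · simp [ENNReal.rpow_eq_zero_iff, ht, ENNReal.ofReal_eq_zero, not_le, ht.le]
  · simp [ENNReal.rpow_eq_top_iff, ENNReal.ofReal_ne_top, ENNReal.ofReal_eq_zero, not_le, ht]

private lemma minkowski_tsum (f : ℕ → α → ℝ≥0∞) (hf : ∀ n, Measurable (f n)) :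
    (∫⁻ x, (∑' j, f j x) ^ (2:ℝ) ∂μ) ^ (1/(2:ℝ)) ≤
      ∑' j, (∫⁻ x, f j x ^ (2:ℝ) ∂μ) ^ (1/(2:ℝ)) := by
  have key : ∀ n : ℕ, (∫⁻ x, (∑ j ∈ Finset.range n, f j x) ^ (2:ℝ) ∂μ) ^ (1/(2:ℝ)) ≤
      ∑ j ∈ Finset.range n, (∫⁻ x, f j x ^ (2:ℝ) ∂μ) ^ (1/(2:ℝ)) := by
    intro n
    induction n with
    | zero => simp [ENNReal.zero_rpow_of_pos]
    | succ n ih =>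
      have hmeas : Measurable fun x => ∑ j ∈ Finset.range n, f j x :=
        Finset.measurable_sum _ fun j _ => hf j
      have H := ENNReal.lintegral_Lp_add_le (μ := μ)
        hmeas.aemeasurable (hf n).aemeasurable (by norm_num : (1:ℝ) ≤ 2)
      simp only [Pi.add_apply] at H
      simp_rw [Finset.sum_range_succ]
      exact H.trans (add_le_add_left ih _)
  have hmono : ∀ x, Monotone fun n => ∑ j ∈ Finset.range n, f j x := fun x a b hab =>
    Finset.sum_le_sum_of_subset (Finset.range_subset_range.2 hab)
  have h1 : (∫⁻ x, (∑' j, f j x) ^ (2:ℝ) ∂μ) =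
      ⨆ n, ∫⁻ x, (∑ j ∈ Finset.range n, f j x) ^ (2:ℝ) ∂μ := by
    rw [← lintegral_iSup (fun n => (Finset.measurable_sum _ fun j _ => hf j).pow_const _)]
    · congr 1
      funext x
      rw [ENNReal.tsum_eq_iSup_nat, rpow_iSup' _ (by norm_num : (0:ℝ) < 2)]
    · intro a b hab x
      exact ENNReal.rpow_le_rpow (hmono x hab) (by norm_num)
  rw [h1, one_div, rpow_iSup' _ (by norm_num : (0:ℝ) < 2⁻¹)]
  refine iSup_le fun n => ?_
  have h2 := key n
  rw [one_div] at h2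
  exact h2.trans (ENNReal.sum_le_tsum _)

private lemma tsum_int_split (F : ℤ → ℝ≥0∞) (N : ℤ) :
    ∑' k : ℤ, F k = (∑' j : ℕ, F (N - j)) + ∑' j : ℕ, F (N + 1 + j) := by
  have hsplit : ∀ k : ℤ, F k = (if k ≤ N then F k else 0) + (if k ≤ N then 0 else F k) := by
    intro k; split_ifs <;> simp
  have h1 : ∑' j : ℕ, F (N - j) = ∑' k : ℤ, if k ≤ N then F k else 0 := by
    have hinj : Function.Injective (fun j : ℕ => N - (j : ℤ)) := fun a b h => by
      simpa using h
    have H := hinj.tsum_eq (f := fun k : ℤ => if k ≤ N then F k else 0) ?_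
    · rw [← H]
      refine tsum_congr fun j => ?_
      rw [if_pos (by omega)]
    · intro k hk
      have hkN : k ≤ N := by
        by_contra h
        simp [Function.mem_support, if_neg h] at hk
      exact ⟨(N - k).toNat, show N - ((N - k).toNat : ℤ) = k by omega⟩
  have h2 : ∑' j : ℕ, F (N + 1 + j) = ∑' k : ℤ, if k ≤ N then 0 else F k := by
    have hinj : Function.Injective (fun j : ℕ => N + 1 + (j : ℤ)) := fun a b h => by
      simpa using h
    have H := hinj.tsum_eq (f := fun k : ℤ => if k ≤ N then 0 else F k) ?_
    · rw [← H]
      refine tsum_congr fun j => ?_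
      rw [if_neg (by omega)]
    · intro k hk
      have hkN : ¬ k ≤ N := by
        intro h
        simp [Function.mem_support, if_pos h] at hk
      exact ⟨(k - N - 1).toNat, show N + 1 + ((k - N - 1).toNat : ℤ) = k by omega⟩
  rw [h1, h2, ← ENNReal.tsum_add]
  exact tsum_congr hsplit

private lemma geom_ofReal {c r : ℝ} (hc : 0 ≤ c) (hr0 : 0 ≤ r) (hr1 : r < 1) :
    ∑' j : ℕ, ENNReal.ofReal (c * r ^ j) = ENNReal.ofReal (c * (1 - r)⁻¹) := by
  rw [← ENNReal.ofReal_tsum_of_nonneg (fun j => mul_nonneg hc (pow_nonneg hr0 j))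
      ((summable_geometric_of_lt_one hr0 hr1).mul_left c),
    tsum_mul_left, tsum_geometric_of_lt_one hr0 hr1]

end Helpers

set_option maxHeartbeats 1000000 in
/-- Suppose `g_k : ℝ^d → [0,∞)`, `k ∈ ℤ`, are measurable with
`‖g_k‖₁ ≤ A 2^{kγ/2}` and `‖g_k‖₂ ≤ A 2^{-k(d-γ)/2}` for some `0 < γ < d`, `A > 0`. Then
`G = ∑_k g_k` satisfies `|{G > λ}| ≤ C A^{2d/(2d-γ)} λ^{-2d/(2d-γ)}` for all `λ > 0`,
i.e. `G ∈ L^{2d/(2d-γ),∞}`. -/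
theorem stmt19 (d : ℕ) (hd : 1 ≤ d) (γ : ℝ) (hγ0 : 0 < γ) (hγd : γ < d) :
    ∃ C : ℝ, 0 < C ∧ ∀ A : ℝ, 0 < A →
      ∀ g : ℤ → EuclideanSpace ℝ (Fin d) → ℝ,
        (∀ k, Measurable (g k)) → (∀ k x, 0 ≤ g k x) →
        (∀ k : ℤ, eLpNorm (g k) 1 volume ≤ ENNReal.ofReal (A * (2:ℝ) ^ ((k:ℝ) * γ / 2))) →
        (∀ k : ℤ, eLpNorm (g k) 2 volume ≤
          ENNReal.ofReal (A * (2:ℝ) ^ (-(k:ℝ) * ((d:ℝ) - γ) / 2))) →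
        ∀ l : ℝ, 0 < l →
          volume {x : EuclideanSpace ℝ (Fin d) |
              ENNReal.ofReal l < ∑' k : ℤ, ENNReal.ofReal (g k x)}
            ≤ ENNReal.ofReal (C * A ^ (2 * d / (2 * d - γ)) * l ^ (-(2 * d / (2 * d - γ)))) := by
  have hD1 : (1:ℝ) ≤ (d:ℝ) := by exact_mod_cast hd
  have hγD : γ < (d:ℝ) := hγd
  have hq : (0:ℝ) < 2 * d - γ := by linarith
  have hdγ : (0:ℝ) < (d:ℝ) - γ := by linarith
  set r₁ : ℝ := (2:ℝ) ^ (-(γ/2)) with hr₁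
  set r₂ : ℝ := (2:ℝ) ^ (-(((d:ℝ) - γ)/2)) with hr₂
  have hr₁0 : 0 < r₁ := Real.rpow_pos_of_pos two_pos _
  have hr₁1 : r₁ < 1 := Real.rpow_lt_one_of_one_lt_of_neg one_lt_two (by linarith)
  have hr₂0 : 0 < r₂ := Real.rpow_pos_of_pos two_pos _
  have hr₂1 : r₂ < 1 := Real.rpow_lt_one_of_one_lt_of_neg one_lt_two (by linarith)
  set c₁ : ℝ := (1 - r₁)⁻¹ with hc₁
  set c₂ : ℝ := (1 - r₂)⁻¹ with hc₂
  have hc₁0 : 0 < c₁ := inv_pos.2 (by linarith)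
  have hc₂0 : 0 < c₂ := inv_pos.2 (by linarith)
  refine ⟨2 * c₁ + 4 * c₂ ^ 2, by positivity, ?_⟩
  intro A hA g hgm hg0 hg1 hg2 l hl
  set p : ℝ := 2 * (d:ℝ) / (2 * (d:ℝ) - γ) with hp
  set s : ℝ := A / l with hs
  have hs0 : 0 < s := div_pos hA hl
  have hl2 : (0:ℝ) < l / 2 := by linarith
  set N : ℤ := ⌊Real.logb 2 (s ^ (2 / (2 * (d:ℝ) - γ)))⌋ with hN
  have ht0 : (0:ℝ) < s ^ (2 / (2 * (d:ℝ) - γ)) := Real.rpow_pos_of_pos hs0 _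
  have h2N : (2:ℝ) ^ (N:ℝ) ≤ s ^ (2 / (2 * (d:ℝ) - γ)) := by
    conv_rhs => rw [← Real.rpow_logb two_pos (by norm_num) ht0]
    exact Real.rpow_le_rpow_of_exponent_le one_le_two (Int.floor_le _)
  have h2N' : s ^ (2 / (2 * (d:ℝ) - γ)) ≤ (2:ℝ) ^ ((N:ℝ) + 1) := by
    conv_lhs => rw [← Real.rpow_logb two_pos (by norm_num) ht0]
    exact Real.rpow_le_rpow_of_exponent_le one_le_two (le_of_lt (Int.lt_floor_add_one _))
  set Glow : EuclideanSpace ℝ (Fin d) → ℝ≥0∞ :=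
    fun x => ∑' j : ℕ, ENNReal.ofReal (g (N - j) x) with hGlow
  set Ghigh : EuclideanSpace ℝ (Fin d) → ℝ≥0∞ :=
    fun x => ∑' j : ℕ, ENNReal.ofReal (g (N + 1 + j) x) with hGhigh
  have hGlowm : Measurable Glow := Measurable.ennreal_tsum fun j => (hgm _).ennreal_ofReal
  have hGhighm : Measurable Ghigh := Measurable.ennreal_tsum fun j => (hgm _).ennreal_ofReal
  have hsubset : {x : EuclideanSpace ℝ (Fin d) |
      ENNReal.ofReal l < ∑' k : ℤ, ENNReal.ofReal (g k x)} ⊆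
      {x | ENNReal.ofReal (l/2) < Glow x} ∪ {x | ENNReal.ofReal (l/2) < Ghigh x} := by
    intro x hx
    simp only [Set.mem_setOf_eq, tsum_int_split (fun k => ENNReal.ofReal (g k x)) N] at hx
    by_contra hcon
    simp only [Set.mem_union, Set.mem_setOf_eq, not_or, not_lt] at hcon
    have hadd : ENNReal.ofReal (l/2) + ENNReal.ofReal (l/2) = ENNReal.ofReal l := by
      rw [← ENNReal.ofReal_add (by linarith) (by linarith)]
      norm_num
    exact absurd (hadd ▸ add_le_add hcon.1 hcon.2) (not_le.2 hx)
  refine le_trans (measure_mono hsubset) (le_trans (measure_union_le _ _) ?_)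
  -- L¹ bound for each g k
  have hint1 : ∀ k : ℤ, ∫⁻ x, ENNReal.ofReal (g k x) ∂volume ≤
      ENNReal.ofReal (A * (2:ℝ) ^ ((k:ℝ) * γ / 2)) := by
    intro k
    have h := hg1 k
    rw [eLpNorm_one_eq_lintegral_enorm] at h
    refine le_trans (le_of_eq (lintegral_congr fun x => ?_)) h
    rw [← Real.enorm_eq_ofReal (hg0 k x)]
  have hlow : ∫⁻ x, Glow x ∂volume ≤
      ENNReal.ofReal (A * (2:ℝ) ^ ((N:ℝ) * γ / 2) * c₁) := by
    rw [hGlow]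
    rw [lintegral_tsum (fun j => ((hgm _).ennreal_ofReal).aemeasurable)]
    refine le_trans (ENNReal.tsum_le_tsum fun j => hint1 (N - j)) (le_of_eq ?_)
    have hterm : ∀ j : ℕ, A * (2:ℝ) ^ ((((N - (j:ℤ)):ℤ):ℝ) * γ / 2) =
        (A * (2:ℝ) ^ ((N:ℝ) * γ / 2)) * r₁ ^ j := by
      intro j
      have e : (((N - (j:ℤ)):ℤ):ℝ) * γ / 2 = (N:ℝ) * γ / 2 + (-(γ/2)) * (j:ℝ) := by
        push_cast; ring
      rw [e, Real.rpow_add two_pos, mul_assoc]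
      congr 1
      rw [Real.rpow_mul (by norm_num : (0:ℝ) ≤ 2), Real.rpow_natCast]
    calc ∑' j : ℕ, ENNReal.ofReal (A * (2:ℝ) ^ ((((N - (j:ℤ)):ℤ):ℝ) * γ / 2))
        = ∑' j : ℕ, ENNReal.ofReal ((A * (2:ℝ) ^ ((N:ℝ) * γ / 2)) * r₁ ^ j) :=
          tsum_congr fun j => by rw [hterm j]
      _ = ENNReal.ofReal (A * (2:ℝ) ^ ((N:ℝ) * γ / 2) * c₁) :=
          geom_ofReal (by positivity) hr₁0.le hr₁1
  have hμlow : volume {x | ENNReal.ofReal (l/2) < Glow x} ≤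
      ENNReal.ofReal (2 * c₁ * s ^ p) := by
    refine le_trans (markov1 Glow hGlowm hl2) ?_
    refine le_trans (ENNReal.div_le_div_right hlow _) ?_
    rw [← ENNReal.ofReal_div_of_pos hl2]
    refine ENNReal.ofReal_le_ofReal ?_
    have e1 : (2:ℝ) ^ ((N:ℝ) * γ / 2) ≤ s ^ (γ / (2 * (d:ℝ) - γ)) := by
      have h := Real.rpow_le_rpow (Real.rpow_nonneg (by norm_num) _) h2N
        (le_of_lt (half_pos hγ0))
      rw [← Real.rpow_mul (by norm_num : (0:ℝ) ≤ 2), ← Real.rpow_mul hs0.le] at h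
      have e2 : (N:ℝ) * (γ/2) = (N:ℝ) * γ / 2 := by ring
      have e3 : 2 / (2 * (d:ℝ) - γ) * (γ/2) = γ / (2 * (d:ℝ) - γ) := by
        field_simp
      rwa [e2, e3] at h
    have e4 : s * s ^ (γ / (2 * (d:ℝ) - γ)) = s ^ p := by
      nth_rewrite 1 [← Real.rpow_one s]
      rw [← Real.rpow_add hs0, hp]
      congr 1
      field_simp
      ring
    calc A * (2:ℝ) ^ ((N:ℝ) * γ / 2) * c₁ / (l/2)
        = 2 * c₁ * (s * (2:ℝ) ^ ((N:ℝ) * γ / 2)) := by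
          rw [hs]; field_simp
      _ ≤ 2 * c₁ * (s * s ^ (γ / (2 * (d:ℝ) - γ))) := by
          have := mul_le_mul_of_nonneg_left
            (mul_le_mul_of_nonneg_left e1 hs0.le) (by positivity : (0:ℝ) ≤ 2 * c₁)
          exact this
      _ = 2 * c₁ * s ^ p := by rw [e4]
  -- L² bound for each g k
  have hint2 : ∀ k : ℤ, (∫⁻ x, ENNReal.ofReal (g k x) ^ (2:ℝ) ∂volume) ^ (1/(2:ℝ)) ≤
      ENNReal.ofReal (A * (2:ℝ) ^ (-(k:ℝ) * ((d:ℝ) - γ) / 2)) := by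
    intro k
    have h := hg2 k
    rw [eLpNorm_eq_lintegral_rpow_enorm_toReal (by norm_num) (by norm_num)] at h
    simp only [ENNReal.toReal_ofNat] at h
    refine le_trans (le_of_eq ?_) h
    congr 1
    refine lintegral_congr fun x => ?_
    rw [← Real.enorm_eq_ofReal (hg0 k x)]
  have hhigh2 : (∫⁻ x, Ghigh x ^ (2:ℝ) ∂volume) ^ (1/(2:ℝ)) ≤
      ENNReal.ofReal (A * (2:ℝ) ^ ((-(N:ℝ) - 1) * ((d:ℝ) - γ) / 2) * c₂) := by
    rw [hGhigh]
    refine le_trans (minkowski_tsum _ (fun j => (hgm _).ennreal_ofReal)) ?_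
    refine le_trans (ENNReal.tsum_le_tsum fun j => hint2 (N + 1 + j)) (le_of_eq ?_)
    have hterm : ∀ j : ℕ, A * (2:ℝ) ^ (-(((N + 1 + (j:ℤ)):ℤ):ℝ) * ((d:ℝ) - γ) / 2) =
        (A * (2:ℝ) ^ ((-(N:ℝ) - 1) * ((d:ℝ) - γ) / 2)) * r₂ ^ j := by
      intro j
      have e : -(((N + 1 + (j:ℤ)):ℤ):ℝ) * ((d:ℝ) - γ) / 2 =
          (-(N:ℝ) - 1) * ((d:ℝ) - γ) / 2 + (-(((d:ℝ) - γ)/2)) * (j:ℝ) := by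
        push_cast; ring
      rw [e, Real.rpow_add two_pos, mul_assoc]
      congr 1
      rw [Real.rpow_mul (by norm_num : (0:ℝ) ≤ 2), Real.rpow_natCast]
    calc ∑' j : ℕ, ENNReal.ofReal (A * (2:ℝ) ^ (-(((N + 1 + (j:ℤ)):ℤ):ℝ) * ((d:ℝ) - γ) / 2))
        = ∑' j : ℕ, ENNReal.ofReal ((A * (2:ℝ) ^ ((-(N:ℝ) - 1) * ((d:ℝ) - γ) / 2)) * r₂ ^ j) :=
          tsum_congr fun j => by rw [hterm j]
      _ = ENNReal.ofReal (A * (2:ℝ) ^ ((-(N:ℝ) - 1) * ((d:ℝ) - γ) / 2) * c₂) :=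
          geom_ofReal (by positivity) hr₂0.le hr₂1
  have hμhigh : volume {x | ENNReal.ofReal (l/2) < Ghigh x} ≤
      ENNReal.ofReal (4 * c₂ ^ 2 * s ^ p) := by
    refine le_trans (markov2 Ghigh hGhighm hl2) ?_
    have h1 : ∫⁻ x, Ghigh x ^ (2:ℝ) ∂volume ≤
        ENNReal.ofReal (A * (2:ℝ) ^ ((-(N:ℝ) - 1) * ((d:ℝ) - γ) / 2) * c₂) ^ (2:ℝ) := by
      have h := ENNReal.rpow_le_rpow hhigh2 (by norm_num : (0:ℝ) ≤ 2)
      rwa [← ENNReal.rpow_mul, show (1/(2:ℝ)) * 2 = 1 by norm_num,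
        ENNReal.rpow_one] at h
    refine le_trans (ENNReal.div_le_div_right h1 _) ?_
    rw [← ENNReal.div_rpow_of_nonneg _ _ (by norm_num : (0:ℝ) ≤ 2),
      ← ENNReal.ofReal_div_of_pos hl2,
      ENNReal.ofReal_rpow_of_nonneg (by positivity) (by norm_num : (0:ℝ) ≤ 2)]
    refine ENNReal.ofReal_le_ofReal ?_
    have e1 : (2:ℝ) ^ ((-(N:ℝ) - 1) * ((d:ℝ) - γ) / 2) ≤
        s ^ (-((d:ℝ) - γ) / (2 * (d:ℝ) - γ)) := by
      have h := Real.rpow_le_rpow_of_nonpos ht0 h2N'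
        (by linarith : -(((d:ℝ) - γ)/2) ≤ 0)
      rw [← Real.rpow_mul (by norm_num : (0:ℝ) ≤ 2), ← Real.rpow_mul hs0.le] at h
      have e2 : ((N:ℝ) + 1) * (-(((d:ℝ) - γ)/2)) = (-(N:ℝ) - 1) * ((d:ℝ) - γ) / 2 := by ring
      have e3 : 2 / (2 * (d:ℝ) - γ) * (-(((d:ℝ) - γ)/2)) =
          -((d:ℝ) - γ) / (2 * (d:ℝ) - γ) := by
        field_simp
      rwa [e2, e3] at h
    have e4 : (s * s ^ (-((d:ℝ) - γ) / (2 * (d:ℝ) - γ))) ^ (2:ℕ) = s ^ p := by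
      nth_rewrite 1 [← Real.rpow_one s]
      rw [← Real.rpow_add hs0, ← Real.rpow_natCast
        (s ^ (1 + -((d:ℝ) - γ) / (2 * (d:ℝ) - γ))) 2, ← Real.rpow_mul hs0.le, hp]
      congr 1
      push_cast
      rw [eq_div_iff hq.ne']
      linear_combination 2 * div_mul_cancel₀ (-((d:ℝ) - γ)) hq.ne'
    have hexp2 : (A * (2:ℝ) ^ ((-(N:ℝ) - 1) * ((d:ℝ) - γ) / 2) * c₂ / (l/2)) ^ (2:ℝ) =
        (A * (2:ℝ) ^ ((-(N:ℝ) - 1) * ((d:ℝ) - γ) / 2) * c₂ / (l/2)) ^ (2:ℕ) := by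
      rw [← Real.rpow_natCast _ 2]; norm_num
    rw [hexp2]
    calc (A * (2:ℝ) ^ ((-(N:ℝ) - 1) * ((d:ℝ) - γ) / 2) * c₂ / (l/2)) ^ (2:ℕ)
        = (2 * c₂ * (s * (2:ℝ) ^ ((-(N:ℝ) - 1) * ((d:ℝ) - γ) / 2))) ^ (2:ℕ) := by
          rw [hs]; field_simp
      _ ≤ (2 * c₂ * (s * s ^ (-((d:ℝ) - γ) / (2 * (d:ℝ) - γ)))) ^ (2:ℕ) := by
          refine pow_le_pow_left₀ (by positivity) ?_ 2
          exact mul_le_mul_of_nonneg_left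
            (mul_le_mul_of_nonneg_left e1 hs0.le) (by positivity)
      _ = 4 * c₂ ^ 2 * s ^ p := by
          rw [mul_pow, e4]; ring
  refine le_trans (add_le_add hμlow hμhigh) ?_
  rw [← ENNReal.ofReal_add (by positivity) (by positivity)]
  refine ENNReal.ofReal_le_ofReal ?_
  have hsp : s ^ p = A ^ p * l ^ (-p) := by
    rw [hs, Real.div_rpow hA.le hl.le, Real.rpow_neg hl.le, div_eq_mul_inv]
  rw [hsp]
  nlinarith [Real.rpow_pos_of_pos hA p, Real.rpow_pos_of_pos hl p, sq_nonneg c₂,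
    mul_pos (Real.rpow_pos_of_pos hA p) (inv_pos.2 (Real.rpow_pos_of_pos hl p))]
end
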